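/- Let Y be a random variable with distribution function F_Y and let X be another random variable. If for every real λ, lim_{v→∞} P(Y > λ | X > v) = 1, then lim_{v→∞} E[F_Y(Y) | X > v] = 1 (assuming P(X > v) > 0 for all v). -/

import Mathlib

open MeasureTheory Filter

/-- If `P(Y > λ | X > v) → 1` as `v → ∞` for every `λ`, then
`E[F_Y(Y) | X > v] → 1` as `v → ∞`. -/
theorem cond_expectation_tendsto_one {Ω : Type*} [MeasurableSpace Ω]
    (μ : Measure Ω) [IsProbabilityMeasure μ]
    (X Y : Ω → ℝ) (hX : Measurable X) (hY : Measurable Y)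
    (F : ℝ → ℝ) (hF : ∀ y, F y = (μ {ω | Y ω ≤ y}).toReal)
    (hpos : ∀ v : ℝ, 0 < μ {ω | v < X ω})
    (happrox : ∀ ε > (0:ℝ), ∃ lam : ℝ, 1 - ε < F lam)
    (hcond : ∀ lam : ℝ, Tendsto
      (fun v => (μ ({ω | lam < Y ω} ∩ {ω | v < X ω})).toReal / (μ {ω | v < X ω}).toReal)
      atTop (nhds 1)) :
    Tendsto
      (fun v => (∫ ω in {ω | v < X ω}, F (Y ω) ∂μ) / (μ {ω | v < X ω}).toReal)
      atTop (nhds 1) := by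
  have hFmono : Monotone F := by
    intro a b hab
    rw [hF, hF]
    exact ENNReal.toReal_mono (measure_ne_top _ _)
      (measure_mono fun ω hω => le_trans hω hab)
  have hFmeas : Measurable F := hFmono.measurable
  have hF0 : ∀ y, 0 ≤ F y := fun y => by rw [hF]; exact ENNReal.toReal_nonneg
  have hF1 : ∀ y, F y ≤ 1 := fun y => by
    rw [hF]
    have := ENNReal.toReal_mono ENNReal.one_ne_top (prob_le_one (μ := μ) (s := {ω | Y ω ≤ y}))
    simpa using this
  rw [Metric.tendsto_nhds]
  intro ε hε
  set ε' : ℝ := min ε 1 / 2 with hε'def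
  have hε'pos : 0 < ε' := by
    have : 0 < min ε 1 := lt_min hε one_pos
    positivity
  have h2ε' : 2 * ε' ≤ ε := by
    have := min_le_left ε 1
    simp only [hε'def]; linarith
  have hε'lt : ε' < 1 := by
    have := min_le_right ε 1
    simp only [hε'def]; linarith
  obtain ⟨lam, hlam⟩ := happrox ε' hε'pos
  have hr : ∀ᶠ v in atTop,
      1 - ε' < (μ ({ω | lam < Y ω} ∩ {ω | v < X ω})).toReal / (μ {ω | v < X ω}).toReal :=
    (hcond lam).eventually (eventually_gt_nhds (by linarith))
  filter_upwards [hr] with v hrv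
  set A : Set Ω := {ω | lam < Y ω} with hA
  set B : Set Ω := {ω | v < X ω} with hB
  have hAmeas : MeasurableSet A := measurableSet_lt measurable_const hY
  have hBmeas : MeasurableSet B := measurableSet_lt measurable_const hX
  have hBpos : 0 < (μ B).toReal := ENNReal.toReal_pos (hpos v).ne' (measure_ne_top μ B)
  have hint : Integrable (fun ω => F (Y ω)) (μ.restrict B) := by
    apply Integrable.mono' (integrable_const (1 : ℝ))
    · exact (hFmeas.comp hY).aestronglyMeasurable
    · filter_upwards with ω
      rw [Real.norm_eq_abs, abs_le]
      exact ⟨by linarith [hF0 (Y ω)], hF1 _⟩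
  have hupper : (∫ ω in B, F (Y ω) ∂μ) ≤ (μ B).toReal := by
    calc (∫ ω in B, F (Y ω) ∂μ) ≤ ∫ _ in B, (1 : ℝ) ∂μ :=
          integral_mono hint (integrable_const 1) fun ω => hF1 _
      _ = (μ B).toReal := by simp [Measure.real_def]
  have hlower : F lam * (μ (A ∩ B)).toReal ≤ ∫ ω in B, F (Y ω) ∂μ := by
    have hsub : A ∩ B ⊆ B := Set.inter_subset_right
    have hintAB : IntegrableOn (fun ω => F (Y ω)) (A ∩ B) μ :=
      hint.mono_measure (Measure.restrict_mono hsub le_rfl)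
    calc F lam * (μ (A ∩ B)).toReal ≤ ∫ ω in A ∩ B, F (Y ω) ∂μ := by
          apply setIntegral_ge_of_const_le_real (hAmeas.inter hBmeas) (measure_ne_top _ _)
          · intro ω hω
            exact hFmono (le_of_lt hω.1)
          · exact hintAB
      _ ≤ ∫ ω in B, F (Y ω) ∂μ :=
          setIntegral_mono_set hint (Eventually.of_forall fun ω => hF0 _)
            (HasSubset.Subset.eventuallyLE hsub)
  have hratio_le : (∫ ω in B, F (Y ω) ∂μ) / (μ B).toReal ≤ 1 :=
    (div_le_one hBpos).mpr hupper
  have hFlam_pos : 0 < F lam := by linarith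
  have hprod : (1 - ε') * (1 - ε') < F lam * ((μ (A ∩ B)).toReal / (μ B).toReal) :=
    mul_lt_mul'' hlam hrv (by linarith) (by linarith)
  have hratio_ge : F lam * ((μ (A ∩ B)).toReal / (μ B).toReal)
      ≤ (∫ ω in B, F (Y ω) ∂μ) / (μ B).toReal := by
    rw [mul_div_assoc']
    exact div_le_div_of_nonneg_right hlower hBpos.le
  have hgt : 1 - ε < (∫ ω in B, F (Y ω) ∂μ) / (μ B).toReal := by
    nlinarith [sq_nonneg ε']
  rw [Real.dist_eq, abs_lt]
  constructor <;> [linarith; linarith]
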